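/- Let a = p = 1/√2, R > 0, and let h : ℂ → ℂ satisfy A(z)h(z)^3 − 3B_2(z)h(z) − 2B_1(z) = 0 for all |z| > R. Suppose that, as |z| → ∞ along the cobounded filter, z·h(z) → −1, z·(z·h(z)+1) → 0, and z^2·(z·h(z)+1) → β for some complex number β. Then β^2 + β + 1/6 = 0. -/

import Mathlib

open Complex Filter

/-- `A(z) = (z²-1)(z²-a²)`. -/
noncomputable def polyA (a : ℝ) (z : ℂ) : ℂ := (z ^ 2 - 1) * (z ^ 2 - (a : ℂ) ^ 2)

/-- `B₂(z) = z²-p²`. -/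
noncomputable def polyB2 (p : ℝ) (z : ℂ) : ℂ := z ^ 2 - (p : ℂ) ^ 2

/-- `B₁(z) = z`. -/
noncomputable def polyB1 (z : ℂ) : ℂ := z

/-- Case II (`a = p = 1/√2`): if `h` solves `A h³ − 3B₂ h − 2B₁ = 0` for `|z| > R` and has
the expansion `h(z) = −1/z + β/z³ + ⋯` at infinity, then `β² + β + 1/6 = 0`. -/
theorem caseII_third_coefficient (a p R : ℝ) (ha : a = 1 / Real.sqrt 2)
    (hp : p = 1 / Real.sqrt 2) (hR : 0 < R) (h : ℂ → ℂ) (β : ℂ)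
    (heq : ∀ z : ℂ, R < ‖z‖ →
      polyA a z * (h z) ^ 3 - 3 * polyB2 p z * h z - 2 * polyB1 z = 0)
    (hlim1 : Tendsto (fun z : ℂ => z * h z) (Bornology.cobounded ℂ) (nhds (-1)))
    (hlim2 : Tendsto (fun z : ℂ => z * (z * h z + 1)) (Bornology.cobounded ℂ) (nhds 0))
    (hlim3 : Tendsto (fun z : ℂ => z ^ 2 * (z * h z + 1)) (Bornology.cobounded ℂ) (nhds β)) :
    β ^ 2 + β + 1 / 6 = 0 := by
  have ha2 : ((a : ℂ)) ^ 2 = 1 / 2 := by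
    rw [ha]; push_cast
    rw [div_pow, one_pow]
    rw [← Complex.ofReal_pow, Real.sq_sqrt (by norm_num : (0:ℝ) ≤ 2)]; norm_num
  have hp2 : ((p : ℂ)) ^ 2 = 1 / 2 := by
    rw [hp]; push_cast
    rw [div_pow, one_pow]
    rw [← Complex.ofReal_pow, Real.sq_sqrt (by norm_num : (0:ℝ) ≤ 2)]; norm_num
  set u : ℂ → ℂ := fun z => z * h z + 1 with hu_def
  set v : ℂ → ℂ := fun z => z ^ 2 * (z * h z + 1) with hv_def
  set E : ℂ → ℂ := fun z =>
    -(1/2) - 3 * v z + (3/2) * u z - 3 * (v z) ^ 2 + (9/2) * (v z) * (u z)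
      - (3/2) * (u z) ^ 2 + (v z) ^ 2 * (u z) - (3/2) * (v z) * (u z) ^ 2
      + (1/2) * (u z) ^ 3 with hE_def
  have hu : Tendsto u (Bornology.cobounded ℂ) (nhds 0) := by
    have := hlim1.add (tendsto_const_nhds (x := (1 : ℂ)))
    simpa using this
  have hv : Tendsto v (Bornology.cobounded ℂ) (nhds β) := hlim3
  -- E tends to -1/2 - 3β - 3β²
  have hElim : Tendsto E (Bornology.cobounded ℂ)
      (nhds (-(1/2) - 3 * β + (3/2) * 0 - 3 * β ^ 2 + (9/2) * β * 0 - (3/2) * 0 ^ 2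
        + β ^ 2 * 0 - (3/2) * β * 0 ^ 2 + (1/2) * 0 ^ 3)) := by
    apply Tendsto.add
    apply Tendsto.sub
    apply Tendsto.add
    apply Tendsto.sub
    apply Tendsto.add
    apply Tendsto.sub
    apply Tendsto.add
    apply Tendsto.sub
    · exact tendsto_const_nhds
    · exact tendsto_const_nhds.mul hv
    · exact tendsto_const_nhds.mul hu
    · exact tendsto_const_nhds.mul (hv.pow 2)
    · exact (tendsto_const_nhds.mul hv).mul hu
    · exact tendsto_const_nhds.mul (hu.pow 2)
    · exact (hv.pow 2).mul hu
    · exact (tendsto_const_nhds.mul hv).mul (hu.pow 2)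
    · exact tendsto_const_nhds.mul (hu.pow 3)
  -- E is eventually 0
  have hev : ∀ᶠ z : ℂ in Bornology.cobounded ℂ, E z = 0 := by
    have hnorm : ∀ᶠ z : ℂ in Bornology.cobounded ℂ, R < ‖z‖ :=
      tendsto_norm_cobounded_atTop.eventually_gt_atTop R
    filter_upwards [hnorm] with z hz
    have h0 := heq z hz
    have key : E z = z ^ 3 * (polyA a z * (h z) ^ 3 - 3 * polyB2 p z * h z - 2 * polyB1 z) := by
      simp only [hE_def, hu_def, hv_def, polyA, polyB2, polyB1, ha2, hp2]
      ring
    rw [key, h0, mul_zero]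
  have hE0 : Tendsto E (Bornology.cobounded ℂ) (nhds 0) :=
    Tendsto.congr' (hev.mono fun z hz => hz.symm) tendsto_const_nhds
  have := tendsto_nhds_unique hElim hE0
  have h6 : -(1/2 : ℂ) - 3 * β - 3 * β ^ 2 = 0 := by
    rw [← this]; ring
  linear_combination (-1/3 : ℂ) * h6
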